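/- With the notation of the guarded composition of operator-valued functions: if every F_k is full (∑_{δ∈Δ_k} F_k(δ)†F_k(δ) = I_H), then the guarded composition F is full: ∑_{(δ_1,...,δ_n)} F(δ_1,...,δ_n)† F(δ_1,...,δ_n) = I_{H_C⊗H}. -/

import Mathlib

noncomputable section
open scoped InnerProductSpace
open Finset

/-- Coordinate model of the tensor product `H_C ⊗ H` along a fixed orthonormal
basis of the `n`-dimensional coin space `H_C`. -/
abbrev TensorSp (n : ℕ) (H : Type*) [NormedAddCommGroup H] [InnerProductSpace ℂ H] : Type _ :=
  PiLp 2 (fun _ : Fin n => H)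

variable {n : ℕ} {H : Type*} [NormedAddCommGroup H] [InnerProductSpace ℂ H]

/-- the pure tensor `c ⊗ ψ`. -/
def pureTensor (c : EuclideanSpace ℂ (Fin n)) (ψ : H) : TensorSp n H :=
  WithLp.toLp 2 (fun i => c i • ψ)

/-- the block-diagonal operator `∑ᵢ |i⟩⟨i| ⊗ Uᵢ`, i.e. the guarded composition of
the `Uᵢ` along the computational basis of the coin space. -/
def blockDiag (U : Fin n → (H →ₗ[ℂ] H)) : TensorSp n H →ₗ[ℂ] TensorSp n H where
  toFun x := WithLp.toLp 2 (fun i => U i (x i))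
  map_add' x y := PiLp.ext fun i => by simp [map_add]
  map_smul' c x := PiLp.ext fun i => by simp [map_smul]

/-- `A ⊗ B` in the coordinate model, `A` acting on the coin space. -/
def tensorOp (A : EuclideanSpace ℂ (Fin n) →ₗ[ℂ] EuclideanSpace ℂ (Fin n))
    (B : H →ₗ[ℂ] H) : TensorSp n H →ₗ[ℂ] TensorSp n H where
  toFun x := WithLp.toLp 2 (fun i => ∑ b : Fin n, A (EuclideanSpace.single b 1) i • B (x b))
  map_add' x y := PiLp.ext fun i => by
    simp [map_add, smul_add, Finset.sum_add_distrib]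
  map_smul' c x := PiLp.ext fun i => by
    simp [map_smul, Finset.smul_sum, smul_comm c]

/-- `A ⊗ I_H`. -/
def tensorLeft (A : EuclideanSpace ℂ (Fin n) →ₗ[ℂ] EuclideanSpace ℂ (Fin n)) :
    TensorSp n H →ₗ[ℂ] TensorSp n H :=
  tensorOp A LinearMap.id

/-- A linear operator is unitary iff it preserves inner products and is bijective. -/
def IsUnitaryOp {E : Type*} [NormedAddCommGroup E] [InnerProductSpace ℂ E]
    (A : E →ₗ[ℂ] E) : Prop :=
  (∀ x y : E, ⟪A x, A y⟫_ℂ = ⟪x, y⟫_ℂ) ∧ Function.Bijective A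

/-- Positive (semidefinite) operator. -/
def IsPosOp {E : Type*} [NormedAddCommGroup E] [InnerProductSpace ℂ E]
    (A : E →ₗ[ℂ] E) : Prop :=
  ∀ x : E, (⟪x, A x⟫_ℂ).im = 0 ∧ 0 ≤ (⟪x, A x⟫_ℂ).re

/-- Löwner order `A ⊑ B`. -/
def Loewner {E : Type*} [NormedAddCommGroup E] [InnerProductSpace ℂ E]
    (A B : E →ₗ[ℂ] E) : Prop :=
  IsPosOp (B - A)

section guarded
variable [FiniteDimensional ℂ H] {Δ : Fin n → Type*} [∀ k, Fintype (Δ k)]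

/-- the coefficients `λ_{kδ}`. -/
def lam (F : ∀ k, Δ k → (H →ₗ[ℂ] H)) (k : Fin n) (δ : Δ k) : ℝ :=
  Real.sqrt ((LinearMap.trace ℂ H (LinearMap.adjoint (F k δ) ∘ₗ F k δ)).re /
    ∑ τ : Δ k, (LinearMap.trace ℂ H (LinearMap.adjoint (F k τ) ∘ₗ F k τ)).re)

/-- the guarded composition `□ᵢ |i⟩ → Fᵢ` of operator-valued functions, evaluated at
`⊕ᵢ δᵢ`. -/
def guardedComp (F : ∀ k, Δ k → (H →ₗ[ℂ] H)) (δ : ∀ k, Δ k) :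
    TensorSp n H →ₗ[ℂ] TensorSp n H where
  toFun x := WithLp.toLp 2 (fun i => (∏ k ∈ Finset.univ.erase i, lam F k (δ k)) • F i (δ i) (x i))
  map_add' x y := PiLp.ext fun i => by simp [map_add, smul_add]
  map_smul' c x := PiLp.ext fun i => by
    simp [map_smul, smul_comm c]

end guarded

/-- partial trace over the coin space of an operator on `H_C ⊗ H`. -/
def coinProj (i : Fin n) : TensorSp n H →ₗ[ℂ] H where
  toFun x := x i
  map_add' _ _ := rfl
  map_smul' _ _ := rfl

def coinIncl (i : Fin n) : H →ₗ[ℂ] TensorSp n H where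
  toFun ψ := WithLp.toLp 2 (Pi.single i ψ)
  map_add' x y := PiLp.ext fun j => by rcases eq_or_ne j i with rfl | h <;> simp [*]
  map_smul' c x := PiLp.ext fun j => by rcases eq_or_ne j i with rfl | h <;> simp [*]

def trCoin (A : TensorSp n H →ₗ[ℂ] TensorSp n H) : H →ₗ[ℂ] H :=
  ∑ i : Fin n, coinProj i ∘ₗ A ∘ₗ coinIncl i

/-- the outer product `|x⟩⟨y|`. -/
def outer {E : Type*} [NormedAddCommGroup E] [InnerProductSpace ℂ E]
    (x y : E) : E →ₗ[ℂ] E :=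
  ((innerSL ℂ y).toLinearMap).smulRight x



section auxlemmas

variable [FiniteDimensional ℂ H]

lemma trace_eq_sum_inner_aux (T : H →ₗ[ℂ] H) :
    LinearMap.trace ℂ H T
      = ∑ i, ⟪(stdOrthonormalBasis ℂ H) i, T ((stdOrthonormalBasis ℂ H) i)⟫_ℂ := by
  rw [LinearMap.trace_eq_matrix_trace ℂ (stdOrthonormalBasis ℂ H).toBasis, Matrix.trace]
  simp [Matrix.diag, LinearMap.toMatrix_apply, OrthonormalBasis.coe_toBasis,
    OrthonormalBasis.coe_toBasis_repr_apply, OrthonormalBasis.repr_apply_apply]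

lemma trace_adjoint_comp_re_nonneg (A : H →ₗ[ℂ] H) :
    0 ≤ (LinearMap.trace ℂ H (LinearMap.adjoint A ∘ₗ A)).re := by
  rw [trace_eq_sum_inner_aux, Complex.re_sum]
  refine Finset.sum_nonneg fun i _ => ?_
  rw [LinearMap.comp_apply, LinearMap.adjoint_inner_right]
  exact inner_self_nonneg (𝕜 := ℂ)

variable {Δ : Fin n → Type*} [∀ k, Fintype (Δ k)]

lemma lam_adjoint (F : ∀ k, Δ k → (H →ₗ[ℂ] H)) (k : Fin n) (τ : Δ k) :
    lam (fun k τ => LinearMap.adjoint (F k τ)) k τ = lam F k τ := by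
  have h : ∀ σ : Δ k,
      LinearMap.trace ℂ H
          (LinearMap.adjoint (LinearMap.adjoint (F k σ)) ∘ₗ LinearMap.adjoint (F k σ))
        = LinearMap.trace ℂ H (LinearMap.adjoint (F k σ) ∘ₗ F k σ) := fun σ => by
    rw [LinearMap.adjoint_adjoint, ← Module.End.mul_eq_comp, ← Module.End.mul_eq_comp,
      LinearMap.trace_mul_comm]
  simp only [lam, h]

lemma lam_sq_sum (F : ∀ k, Δ k → (H →ₗ[ℂ] H))
    (hfull : ∀ k, ∑ δ : Δ k, LinearMap.adjoint (F k δ) ∘ₗ F k δ = LinearMap.id)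
    (hpos : 0 < Module.finrank ℂ H) (k : Fin n) :
    ∑ τ : Δ k, lam F k τ ^ 2 = 1 := by
  set t : Δ k → ℝ := fun τ => (LinearMap.trace ℂ H (LinearMap.adjoint (F k τ) ∘ₗ F k τ)).re
    with ht
  have hT : ∑ τ : Δ k, t τ = (Module.finrank ℂ H : ℝ) := by
    have h1 := congrArg (fun M => (LinearMap.trace ℂ H M).re) (hfull k)
    simpa [ht, map_sum, Complex.re_sum, LinearMap.trace_id] using h1
  have hTpos : 0 < ∑ τ : Δ k, t τ := by
    rw [hT]; exact_mod_cast hpos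
  have hsq : ∀ τ : Δ k, lam F k τ ^ 2 = t τ / ∑ σ : Δ k, t σ := fun τ => by
    rw [lam, ← ht, Real.sq_sqrt]
    exact div_nonneg (trace_adjoint_comp_re_nonneg _) hTpos.le
  rw [Finset.sum_congr rfl fun τ _ => hsq τ, ← Finset.sum_div, div_self hTpos.ne']

lemma adjoint_guardedComp (F : ∀ k, Δ k → (H →ₗ[ℂ] H)) (δ : ∀ k, Δ k) :
    LinearMap.adjoint (guardedComp F δ)
      = guardedComp (fun k τ => LinearMap.adjoint (F k τ)) δ := by
  symm
  rw [LinearMap.eq_adjoint_iff]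
  intro x y
  simp only [guardedComp, LinearMap.coe_mk, AddHom.coe_mk, PiLp.inner_apply, lam_adjoint]
  refine Finset.sum_congr rfl fun i _ => ?_
  rw [← algebraMap_smul ℂ (∏ k ∈ Finset.univ.erase i, lam F k (δ k)),
    ← algebraMap_smul ℂ (∏ k ∈ Finset.univ.erase i, lam F k (δ k)),
    inner_smul_left, inner_smul_right, LinearMap.adjoint_inner_left]
  simp [Complex.conj_ofReal]

lemma guarded_key (F : ∀ k, Δ k → (H →ₗ[ℂ] H))
    (hfull : ∀ k, ∑ δ : Δ k, LinearMap.adjoint (F k δ) ∘ₗ F k δ = LinearMap.id)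
    (hpos : 0 < Module.finrank ℂ H) (i : Fin n) (ψ : H) :
    ∑ δ : (∀ k, Δ k), (∏ k ∈ Finset.univ.erase i, lam F k (δ k) ^ 2) •
        (LinearMap.adjoint (F i (δ i)) ∘ₗ F i (δ i)) ψ = ψ := by
  classical
  have hprod : ∀ δ : (∀ k, Δ k),
      (∏ k ∈ Finset.univ.erase i, lam F k (δ k) ^ 2)
        = ∏ j : { j : Fin n // j ≠ i }, lam F j (δ j) ^ 2 := fun δ =>
    Finset.prod_subtype _ (fun x => by simp [Finset.mem_erase]) _
  simp only [hprod]
  rw [← Equiv.sum_comp (Equiv.piSplitAt i Δ).symm, Fintype.sum_prod_type]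
  have hv : ∀ (τ : Δ i) (ρ : ∀ j : { j : Fin n // j ≠ i }, Δ j),
      (∏ j : { j : Fin n // j ≠ i },
          lam F j (((Equiv.piSplitAt i Δ).symm (τ, ρ)) j) ^ 2) •
          (LinearMap.adjoint (F i (((Equiv.piSplitAt i Δ).symm (τ, ρ)) i)) ∘ₗ
            F i (((Equiv.piSplitAt i Δ).symm (τ, ρ)) i)) ψ
        = (∏ j : { j : Fin n // j ≠ i }, lam F j (ρ j) ^ 2) •
          (LinearMap.adjoint (F i τ) ∘ₗ F i τ) ψ := by
    intro τ ρ
    have h1 : ((Equiv.piSplitAt i Δ).symm (τ, ρ)) i = τ := by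
      simp [Equiv.piSplitAt_symm_apply]
    have h2 : ∀ j : { j : Fin n // j ≠ i },
        ((Equiv.piSplitAt i Δ).symm (τ, ρ)) (j : Fin n) = ρ j := fun j => by
      simp only [Equiv.piSplitAt_symm_apply, dif_neg j.2]
    simp only [h1]
    congr 1
    exact Finset.prod_congr rfl fun j _ => by rw [h2]
  simp only [hv]
  rw [Finset.sum_comm]
  have hρ : ∑ ρ : (∀ j : { j : Fin n // j ≠ i }, Δ j),
      ∏ j : { j : Fin n // j ≠ i }, lam F j (ρ j) ^ 2 = 1 := by
    have hps := Fintype.prod_sum (κ := fun j : { j : Fin n // j ≠ i } => Δ (j : Fin n))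
      (fun j τ => lam F (j : Fin n) τ ^ 2)
    rw [← hps]
    exact Finset.prod_eq_one fun j _ => lam_sq_sum F hfull hpos j
  calc ∑ ρ : (∀ j : { j : Fin n // j ≠ i }, Δ j), ∑ τ : Δ i,
        (∏ j : { j : Fin n // j ≠ i }, lam F j (ρ j) ^ 2) •
          (LinearMap.adjoint (F i τ) ∘ₗ F i τ) ψ
      = ∑ ρ : (∀ j : { j : Fin n // j ≠ i }, Δ j),
        (∏ j : { j : Fin n // j ≠ i }, lam F j (ρ j) ^ 2) • ψ := by
        refine Finset.sum_congr rfl fun ρ _ => ?_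
        rw [← Finset.smul_sum]
        congr 1
        have := congrArg (fun (M : H →ₗ[ℂ] H) => M ψ) (hfull i)
        simpa [LinearMap.sum_apply] using this
    _ = ψ := by rw [← Finset.sum_smul, hρ, one_smul]

end auxlemmas

/-- the guarded composition of full operator-valued functions is full. -/
theorem guardedComp_full {n : ℕ} {H : Type*} [NormedAddCommGroup H]
    [InnerProductSpace ℂ H] [FiniteDimensional ℂ H]
    {Δ : Fin n → Type*} [∀ k, Fintype (Δ k)] (F : ∀ k, Δ k → (H →ₗ[ℂ] H))
    (hfull : ∀ k, ∑ δ : Δ k, LinearMap.adjoint (F k δ) ∘ₗ F k δ = LinearMap.id) :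
    ∑ δ : (∀ k, Δ k), LinearMap.adjoint (guardedComp F δ) ∘ₗ guardedComp F δ
      = LinearMap.id := by
  classical
  rcases eq_or_ne (Module.finrank ℂ H) 0 with h0 | hne
  · haveI : Subsingleton H := Module.finrank_zero_iff.mp h0
    exact LinearMap.ext fun x => PiLp.ext fun i => Subsingleton.elim _ _
  · have hpos : 0 < Module.finrank ℂ H := Nat.pos_of_ne_zero hne
    apply LinearMap.ext
    intro x
    rw [LinearMap.sum_apply, LinearMap.id_apply]
    have hterm : ∀ δ : (∀ k, Δ k),
        (LinearMap.adjoint (guardedComp F δ) ∘ₗ guardedComp F δ) x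
          = fun i => (∏ k ∈ Finset.univ.erase i, lam F k (δ k) ^ 2) •
              (LinearMap.adjoint (F i (δ i)) ∘ₗ F i (δ i)) (x i) := by
      intro δ
      funext i
      rw [LinearMap.comp_apply, adjoint_guardedComp]
      simp only [guardedComp, LinearMap.coe_mk, AddHom.coe_mk, lam_adjoint]
      rw [LinearMap.map_smul_of_tower, smul_smul, ← Finset.prod_mul_distrib]
      simp [sq]
    refine PiLp.ext fun i => ?_
    rw [WithLp.ofLp_sum, Finset.sum_apply, Finset.sum_congr rfl fun δ _ => congrFun (hterm δ) i]
    exact guarded_key F hfull hpos i (x i)
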